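/- Let k² ∈ ℝ, and let L ∈ ℂ be nonzero with conjugate L̄. Define a = 1/L + k²L/4, b = -1/L + k²L/4, ā, b̄ their conjugates, and assume Re(a) ≠ 0. Then the Schur complement of the 3×3 assembled matrix [a, b, 0; b, a+ā, b̄; 0, b̄, ā] eliminating the middle variable equals (1/(2Re(a)))·[k² + |a|², -|b|²; -|b|², k² + |a|²], which is a real symmetric matrix. -/

import Mathlib

theorem stmt_14 (k2 : ℝ) (L : ℂ) (hL : L ≠ 0) (a b : ℂ)
    (ha : a = 1 / L + (k2 : ℂ) * L / 4) (hb : b = -(1 / L) + (k2 : ℂ) * L / 4)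
    (hre : a.re ≠ 0) :
    !![a - b * b / (a + (starRingEnd ℂ) a), -(b * (starRingEnd ℂ) b) / (a + (starRingEnd ℂ) a);
       -((starRingEnd ℂ) b * b) / (a + (starRingEnd ℂ) a),
         (starRingEnd ℂ) a - (starRingEnd ℂ) b * (starRingEnd ℂ) b / (a + (starRingEnd ℂ) a)] =
      (1 / (2 * (a.re : ℂ))) •
        !![(k2 : ℂ) + ((‖a‖ : ℝ) : ℂ) ^ 2, -(((‖b‖ : ℝ) : ℂ) ^ 2);
           -(((‖b‖ : ℝ) : ℂ) ^ 2), (k2 : ℂ) + ((‖a‖ : ℝ) : ℂ) ^ 2] := by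
  have hs : a + (starRingEnd ℂ) a = 2 * (a.re : ℂ) := by
    rw [Complex.add_conj]; push_cast; ring
  have hd : (2 * (a.re : ℂ)) ≠ 0 := by
    simp [Complex.ofReal_ne_zero, hre]
  have hk : a ^ 2 - b ^ 2 = (k2 : ℂ) := by
    subst ha hb; field_simp; ring
  have hk' : (starRingEnd ℂ) a ^ 2 - (starRingEnd ℂ) b ^ 2 = (k2 : ℂ) := by
    have := congrArg (starRingEnd ℂ) hk
    simpa using this
  have hna : ((‖a‖ : ℝ) : ℂ) ^ 2 = a * (starRingEnd ℂ) a := by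
    rw [← Complex.ofReal_pow, Complex.sq_norm, Complex.mul_conj]
  have hnb : ((‖b‖ : ℝ) : ℂ) ^ 2 = b * (starRingEnd ℂ) b := by
    rw [← Complex.ofReal_pow, Complex.sq_norm, Complex.mul_conj]
  have hre' : (a.re : ℂ) ≠ 0 := Complex.ofReal_ne_zero.mpr hre
  ext i j
  fin_cases i <;> fin_cases j <;>
    simp only [Matrix.smul_apply, Matrix.cons_val', Matrix.cons_val_zero, Matrix.cons_val_one,
      Matrix.head_cons, Matrix.empty_val', Matrix.cons_val_fin_one, Matrix.head_fin_const,
      smul_eq_mul, Matrix.of_apply, Fin.zero_eta, Fin.mk_one, hna, hnb] <;> rw [hs] <;> field_simp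
  · linear_combination hk - a * hs
  · linear_combination hk' - (starRingEnd ℂ) a * hs
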